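/- Query decomposition lemma: let Q be a graph with finite node set V_Q and edges e_1, …, e_m (ordered pairs of nodes), let D be a finite set, and for each edge e_j let R_j ⊆ D × D be a finite relation. Let x_1, …, x_m be a fractional edge cover of Q (x_j > 0 for all j, and for every node q the sum of x_j over edges e_j incident to q is at least 1). Let U be a nonempty proper subset of V_Q, let E_U be the set of edges having at least one endpoint in U, and let L be the set of partial tuples t_U : U → D such that R_j ⋉ t_U is nonempty for every e_j ∈ E_U. Then the sum over all t_U ∈ L of the product over j = 1, …, m of |R_j ⋉ t_U|^{x_j} is at most the product over j = 1, …, m of |R_j|^{x_j}. -/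
import Mathlib


open scoped Classical

/-- Semijoin `R_j ⋉ t_U` of a relation `Rj ⊆ D × D` associated with the
edge `e = (a, b)` with a partial tuple `t : U → D`: the pairs `(u, v) ∈ Rj`
such that `u = t a` whenever `a ∈ U` and `v = t b` whenever `b ∈ U`. -/
def semijoin {VQ D : Type*} (Rj : Set (D × D)) (e : VQ × VQ) (U : Set VQ)
    (t : U → D) : Set (D × D) :=
  {p ∈ Rj | (∀ h1 : e.1 ∈ U, p.1 = t ⟨e.1, h1⟩) ∧ (∀ h2 : e.2 ∈ U, p.2 = t ⟨e.2, h2⟩)}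

/-- Finset version of the semijoin, with a total tuple. -/
noncomputable def sjF {VQ D : Type*} [Fintype D] (Rj : Set (D × D)) (e : VQ × VQ)
    (W : Finset VQ) (t : VQ → D) : Finset (D × D) :=
  Finset.univ.filter fun p => p ∈ Rj ∧ (e.1 ∈ W → p.1 = t e.1) ∧ (e.2 ∈ W → p.2 = t e.2)

/-- Finite Hölder inequality, derived from weighted AM-GM. -/
lemma holder_aux {ι D : Type*} [Fintype D] (A : Finset ι) (w : ι → ℝ)
    (hpos : ∀ j ∈ A, 0 < w j) (hws : ∑ j ∈ A, w j = 1)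
    (c : ι → D → ℝ) (hc : ∀ j d, 0 ≤ c j d) :
    ∑ d : D, ∏ j ∈ A, c j d ^ w j ≤ ∏ j ∈ A, (∑ d : D, c j d) ^ w j := by
  have hw : ∀ j ∈ A, 0 ≤ w j := fun j hj => (hpos j hj).le
  by_cases hz : ∃ j ∈ A, ∑ d : D, c j d = 0
  · obtain ⟨j0, hj0, hS⟩ := hz
    have hc0 : ∀ d, c j0 d = 0 := fun d =>
      (Finset.sum_eq_zero_iff_of_nonneg (fun d _ => hc j0 d)).mp hS d (Finset.mem_univ d)
    have hzero : ∀ d : D, ∏ j ∈ A, c j d ^ w j = 0 := by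
      intro d
      apply Finset.prod_eq_zero hj0
      rw [hc0 d, Real.zero_rpow (ne_of_gt (hpos j0 hj0))]
    rw [Finset.sum_eq_zero fun d _ => hzero d]
    exact Finset.prod_nonneg fun j _ =>
      Real.rpow_nonneg (Finset.sum_nonneg fun d _ => hc j d) _
  · push_neg at hz
    have hSpos : ∀ j ∈ A, 0 < ∑ d : D, c j d := fun j hj =>
      lt_of_le_of_ne (Finset.sum_nonneg fun d _ => hc j d) (Ne.symm (hz j hj))
    set S : ι → ℝ := fun j => ∑ d : D, c j d with hSdef
    have key : ∀ d : D, ∏ j ∈ A, c j d ^ w j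
        ≤ (∏ j ∈ A, S j ^ w j) * ∑ j ∈ A, w j * (c j d / S j) := by
      intro d
      have h1 : ∏ j ∈ A, (c j d / S j) ^ w j ≤ ∑ j ∈ A, w j * (c j d / S j) :=
        Real.geom_mean_le_arith_mean_weighted A w _ hw hws
          (fun j hj => div_nonneg (hc j d) (hSpos j hj).le)
      have h2 : ∏ j ∈ A, c j d ^ w j
          = (∏ j ∈ A, S j ^ w j) * ∏ j ∈ A, (c j d / S j) ^ w j := by
        rw [← Finset.prod_mul_distrib]
        refine Finset.prod_congr rfl fun j hj => ?_
        rw [← Real.mul_rpow (hSpos j hj).le (div_nonneg (hc j d) (hSpos j hj).le),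
          mul_div_cancel₀ _ (ne_of_gt (hSpos j hj))]
      rw [h2]
      exact mul_le_mul_of_nonneg_left h1
        (Finset.prod_nonneg fun j hj => Real.rpow_nonneg (hSpos j hj).le _)
    calc ∑ d : D, ∏ j ∈ A, c j d ^ w j
        ≤ ∑ d : D, (∏ j ∈ A, S j ^ w j) * ∑ j ∈ A, w j * (c j d / S j) :=
          Finset.sum_le_sum fun d _ => key d
      _ = (∏ j ∈ A, S j ^ w j) * ∑ d : D, ∑ j ∈ A, w j * (c j d / S j) := by
          rw [← Finset.mul_sum]
      _ = (∏ j ∈ A, S j ^ w j) * ∑ j ∈ A, w j * (S j / S j) := by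
          rw [Finset.sum_comm]
          congr 1
          refine Finset.sum_congr rfl fun j hj => ?_
          rw [← Finset.mul_sum, ← Finset.sum_div]
      _ = ∏ j ∈ A, S j ^ w j := by
          have : ∑ j ∈ A, w j * (S j / S j) = 1 := by
            rw [← hws]
            refine Finset.sum_congr rfl fun j hj => ?_
            rw [div_self (ne_of_gt (hSpos j hj)), mul_one]
          rw [this, mul_one]

/-- `∑ a^s ≤ (∑ a)^s` for `1 ≤ s` and nonnegative `a`. -/
lemma sum_rpow_le {D : Type*} [Fintype D] (a : D → ℝ) (ha : ∀ d, 0 ≤ a d)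
    {s : ℝ} (hs : 1 ≤ s) :
    ∑ d : D, a d ^ s ≤ (∑ d : D, a d) ^ s := by
  set T := ∑ d : D, a d with hT
  have hT0 : 0 ≤ T := Finset.sum_nonneg fun d _ => ha d
  rcases eq_or_lt_of_le hT0 with hT0' | hT0'
  · have ha0 : ∀ d, a d = 0 := fun d =>
      (Finset.sum_eq_zero_iff_of_nonneg (fun d _ => ha d)).mp hT0'.symm d (Finset.mem_univ d)
    have : ∑ d : D, a d ^ s = 0 := Finset.sum_eq_zero fun d _ => by
      rw [ha0 d, Real.zero_rpow (by linarith)]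
    rw [this]
    exact Real.rpow_nonneg hT0 s
  · have hterm : ∀ d : D, a d ^ s ≤ a d * T ^ (s - 1) := by
      intro d
      rcases eq_or_lt_of_le (ha d) with h0 | h0
      · rw [← h0, Real.zero_rpow (by linarith), zero_mul]
      · have haT : a d ≤ T := Finset.single_le_sum (fun d _ => ha d) (Finset.mem_univ d)
        calc a d ^ s = a d ^ (1 + (s - 1)) := by ring_nf
          _ = a d ^ (1 : ℝ) * a d ^ (s - 1) := Real.rpow_add h0 _ _
          _ ≤ a d * T ^ (s - 1) := by
              rw [Real.rpow_one]
              exact mul_le_mul_of_nonneg_left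
                (Real.rpow_le_rpow (ha d) (haT) (by linarith)) (ha d)
    calc ∑ d : D, a d ^ s ≤ ∑ d : D, a d * T ^ (s - 1) :=
          Finset.sum_le_sum fun d _ => hterm d
      _ = T * T ^ (s - 1) := by rw [← Finset.sum_mul]
      _ = T ^ (1 : ℝ) * T ^ (s - 1) := by rw [Real.rpow_one]
      _ = T ^ (1 + (s - 1)) := (Real.rpow_add hT0' _ _).symm
      _ = T ^ s := by ring_nf

/-- One-variable elimination step: if the weights on `A` sum to at least `1`,
then `∑_d ∏_{j ∈ A} c_j(d)^{x_j} ≤ ∏_{j ∈ A} b_j^{x_j}` provided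
`∑_d c_j(d) ≤ b_j`. -/
lemma holder_step {ι D : Type*} [Fintype D] (A : Finset ι) (x : ι → ℝ)
    (hx : ∀ j ∈ A, 0 < x j) (hs : 1 ≤ ∑ j ∈ A, x j)
    (c : ι → D → ℝ) (hc : ∀ j d, 0 ≤ c j d)
    (b : ι → ℝ) (hb : ∀ j ∈ A, ∑ d : D, c j d ≤ b j) (hb0 : ∀ j, 0 ≤ b j) :
    ∑ d : D, ∏ j ∈ A, c j d ^ x j ≤ ∏ j ∈ A, b j ^ x j := by
  set s := ∑ j ∈ A, x j with hsdef
  have hs0 : (0 : ℝ) < s := lt_of_lt_of_le one_pos hs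
  set w : ι → ℝ := fun j => x j / s with hwdef
  have hwpos : ∀ j ∈ A, 0 < w j := fun j hj => div_pos (hx j hj) hs0
  have hws : ∑ j ∈ A, w j = 1 := by
    rw [hwdef]
    simp only
    rw [← Finset.sum_div, ← hsdef, div_self (ne_of_gt hs0)]
  have hx_eq : ∀ j, x j = s * w j := fun j => by
    rw [hwdef]; field_simp
  have step1 : ∑ d : D, ∏ j ∈ A, c j d ^ x j
      ≤ ∏ j ∈ A, (∑ d : D, c j d ^ s) ^ w j := by
    have := holder_aux A w hwpos hws (fun j d => c j d ^ s)
      (fun j d => Real.rpow_nonneg (hc j d) s)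
    refine le_trans (le_of_eq ?_) this
    refine Finset.sum_congr rfl fun d _ => Finset.prod_congr rfl fun j hj => ?_
    rw [hx_eq j, Real.rpow_mul (hc j d)]
  refine le_trans step1 (Finset.prod_le_prod ?_ ?_)
  · intro j hj
    exact Real.rpow_nonneg (Finset.sum_nonneg fun d _ => Real.rpow_nonneg (hc j d) s) _
  · intro j hj
    have h1 : ∑ d : D, c j d ^ s ≤ b j ^ s := by
      refine le_trans (sum_rpow_le (c j) (hc j) hs) ?_
      exact Real.rpow_le_rpow (Finset.sum_nonneg fun d _ => hc j d) (hb j hj) (by linarith)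
    calc (∑ d : D, c j d ^ s) ^ w j ≤ (b j ^ s) ^ w j :=
          Real.rpow_le_rpow (Finset.sum_nonneg fun d _ => Real.rpow_nonneg (hc j d) s)
            h1 (hwpos j hj).le
      _ = b j ^ x j := by rw [← Real.rpow_mul (hb0 j), ← hx_eq j]

/-- Main induction over the finite set of fixed variables. -/
lemma main_ind {VQ D : Type*} [Fintype VQ] [Fintype D]
    (m : ℕ) (e : Fin m → VQ × VQ) (R : Fin m → Set (D × D))
    (x : Fin m → ℝ) (hx : ∀ j, 0 < x j)
    (hcover : ∀ q : VQ,
      1 ≤ ∑ j ∈ Finset.univ.filter (fun j : Fin m => (e j).1 = q ∨ (e j).2 = q), x j)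
    (d₀ : D) (W : Finset VQ) :
    ∑ t ∈ Finset.univ.filter (fun t : VQ → D => ∀ q, q ∉ W → t q = d₀),
        ∏ j, ((sjF (R j) (e j) W t).card : ℝ) ^ x j
      ≤ ∏ j, ((sjF (R j) (e j) (∅ : Finset VQ) (fun _ => d₀)).card : ℝ) ^ x j := by
  induction W using Finset.induction_on with
  | empty =>
    have hfil : Finset.univ.filter
        (fun t : VQ → D => ∀ q, q ∉ (∅ : Finset VQ) → t q = d₀) = {fun _ => d₀} := by
      ext t
      simp [funext_iff]
    rw [hfil, Finset.sum_singleton]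
  | @insert q W hq ih =>
    classical
    -- reindex the sum
    have reindex :
        ∑ t ∈ Finset.univ.filter (fun t : VQ → D => ∀ r, r ∉ insert q W → t r = d₀),
            ∏ j, ((sjF (R j) (e j) (insert q W) t).card : ℝ) ^ x j
        = ∑ t' ∈ Finset.univ.filter (fun t : VQ → D => ∀ r, r ∉ W → t r = d₀),
            ∑ d : D, ∏ j, ((sjF (R j) (e j) (insert q W) (Function.update t' q d)).card : ℝ) ^ x j := by
      rw [← Finset.sum_product']
      refine Finset.sum_bij' (fun t _ => (Function.update t q d₀, t q))
        (fun p _ => Function.update p.1 q p.2) ?_ ?_ ?_ ?_ ?_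
      · intro t ht
        simp only [Finset.mem_filter, Finset.mem_univ, true_and] at ht ⊢
        rw [Finset.mem_product]
        refine ⟨?_, Finset.mem_univ _⟩
        simp only [Finset.mem_filter, Finset.mem_univ, true_and]
        intro r hr
        by_cases hrq : r = q
        · subst hrq; simp [Function.update_self]
        · rw [Function.update_of_ne hrq]
          exact ht r (by simp [Finset.mem_insert, hrq, hr])
      · intro p hp
        rw [Finset.mem_product] at hp
        simp only [Finset.mem_filter, Finset.mem_univ, true_and] at hp ⊢
        intro r hr
        have hrq : r ≠ q := fun h => hr (h ▸ Finset.mem_insert_self q W)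
        rw [Function.update_of_ne hrq]
        exact hp.1 r (fun h => hr (Finset.mem_insert_of_mem h))
      · intro t ht
        simp only
        rw [Function.update_idem, Function.update_eq_self]
      · intro p hp
        rw [Finset.mem_product] at hp
        simp only [Finset.mem_filter, Finset.mem_univ, true_and] at hp
        have h1 : Function.update (Function.update p.1 q p.2) q d₀ = p.1 := by
          rw [Function.update_idem]
          have : d₀ = p.1 q := (hp.1 q hq).symm
          rw [this, Function.update_eq_self]
        have h2 : Function.update p.1 q p.2 q = p.2 := Function.update_self _ _ _
        show (Function.update (Function.update p.1 q p.2) q d₀,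
          Function.update p.1 q p.2 q) = p
        rw [h1, h2]
      · intro t ht
        simp only
        rw [Function.update_idem, Function.update_eq_self]
    rw [reindex]
    refine le_trans (Finset.sum_le_sum ?_) ih
    intro t' ht'
    -- inner inequality for a fixed t'
    set A : Finset (Fin m) :=
      Finset.univ.filter (fun j : Fin m => (e j).1 = q ∨ (e j).2 = q) with hA
    have hAmem : ∀ j, j ∈ A ↔ ((e j).1 = q ∨ (e j).2 = q) := by
      intro j; simp [hA]
    -- for j ∉ A the semijoin does not change
    have hfix : ∀ j, j ∉ A → ∀ d : D,
        sjF (R j) (e j) (insert q W) (Function.update t' q d)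
          = sjF (R j) (e j) W t' := by
      intro j hj d
      rw [hAmem] at hj
      push_neg at hj
      obtain ⟨h1, h2⟩ := hj
      ext p
      simp only [sjF, Finset.mem_filter, Finset.mem_univ, true_and, Finset.mem_insert]
      rw [Function.update_of_ne h1, Function.update_of_ne h2]
      constructor
      · rintro ⟨hR, hc1, hc2⟩
        exact ⟨hR, fun h => hc1 (Or.inr h), fun h => hc2 (Or.inr h)⟩
      · rintro ⟨hR, hc1, hc2⟩
        exact ⟨hR, fun h => hc1 (h.resolve_left h1), fun h => hc2 (h.resolve_left h2)⟩
    -- for j ∈ A the semijoins over d are disjoint subsets of the W-semijoin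
    have hsub : ∀ j ∈ A, ∀ d : D,
        sjF (R j) (e j) (insert q W) (Function.update t' q d)
          ⊆ (sjF (R j) (e j) W t').filter
              (fun p => (if (e j).1 = q then p.1 else p.2) = d) := by
      intro j hj d p hp
      simp only [sjF, Finset.mem_filter, Finset.mem_univ, true_and, Finset.mem_insert] at hp ⊢
      obtain ⟨hR, hc1, hc2⟩ := hp
      have hW1 : (e j).1 ∈ W → p.1 = t' (e j).1 := by
        intro h
        have hne : (e j).1 ≠ q := fun hh => hq (hh ▸ h)
        rw [hc1 (Or.inr h), Function.update_of_ne hne]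
      have hW2 : (e j).2 ∈ W → p.2 = t' (e j).2 := by
        intro h
        have hne : (e j).2 ≠ q := fun hh => hq (hh ▸ h)
        rw [hc2 (Or.inr h), Function.update_of_ne hne]
      refine ⟨⟨hR, hW1, hW2⟩, ?_⟩
      by_cases h1 : (e j).1 = q
      · rw [if_pos h1, hc1 (Or.inl h1), h1, Function.update_self]
      · rw [if_neg h1]
        have h2 : (e j).2 = q := ((hAmem j).mp hj).resolve_left h1
        rw [hc2 (Or.inl h2), h2, Function.update_self]
    have hsum : ∀ j ∈ A,
        ∑ d : D, ((sjF (R j) (e j) (insert q W) (Function.update t' q d)).card : ℝ)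
          ≤ ((sjF (R j) (e j) W t').card : ℝ) := by
      intro j hj
      have hfib : (sjF (R j) (e j) W t').card
          = ∑ d : D, ((sjF (R j) (e j) W t').filter
              (fun p => (if (e j).1 = q then p.1 else p.2) = d)).card :=
        Finset.card_eq_sum_card_fiberwise (fun p _ => Finset.mem_univ _)
      have : ∑ d : D, (sjF (R j) (e j) (insert q W) (Function.update t' q d)).card
          ≤ (sjF (R j) (e j) W t').card := by
        rw [hfib]
        exact Finset.sum_le_sum fun d _ => Finset.card_le_card (hsub j hj d)
      exact_mod_cast this
    -- split the product over A and its complement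
    have hsplit : ∀ d : D,
        ∏ j, ((sjF (R j) (e j) (insert q W) (Function.update t' q d)).card : ℝ) ^ x j
        = (∏ j ∈ A, ((sjF (R j) (e j) (insert q W) (Function.update t' q d)).card : ℝ) ^ x j)
          * ∏ j ∈ Finset.univ.filter (fun j : Fin m => ¬((e j).1 = q ∨ (e j).2 = q)),
              ((sjF (R j) (e j) W t').card : ℝ) ^ x j := by
      intro d
      rw [← Finset.prod_filter_mul_prod_filter_not Finset.univ
        (fun j : Fin m => (e j).1 = q ∨ (e j).2 = q)]
      congr 1
      refine Finset.prod_congr rfl fun j hj => ?_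
      have hjA : j ∉ A := by
        simp only [Finset.mem_filter, Finset.mem_univ, true_and] at hj
        rw [hAmem]; exact hj
      rw [hfix j hjA d]
    have hinner : ∑ d : D, ∏ j ∈ A,
          ((sjF (R j) (e j) (insert q W) (Function.update t' q d)).card : ℝ) ^ x j
        ≤ ∏ j ∈ A, ((sjF (R j) (e j) W t').card : ℝ) ^ x j := by
      refine holder_step A x (fun j _ => hx j) (by rw [hA]; exact hcover q)
        (fun j d => ((sjF (R j) (e j) (insert q W) (Function.update t' q d)).card : ℝ))
        (fun j d => Nat.cast_nonneg _)
        (fun j => ((sjF (R j) (e j) W t').card : ℝ)) hsum (fun j => Nat.cast_nonneg _)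
    calc ∑ d : D, ∏ j, ((sjF (R j) (e j) (insert q W) (Function.update t' q d)).card : ℝ) ^ x j
        = ∑ d : D, (∏ j ∈ A,
              ((sjF (R j) (e j) (insert q W) (Function.update t' q d)).card : ℝ) ^ x j)
            * ∏ j ∈ Finset.univ.filter (fun j : Fin m => ¬((e j).1 = q ∨ (e j).2 = q)),
              ((sjF (R j) (e j) W t').card : ℝ) ^ x j :=
          Finset.sum_congr rfl fun d _ => hsplit d
      _ = (∑ d : D, ∏ j ∈ A,
              ((sjF (R j) (e j) (insert q W) (Function.update t' q d)).card : ℝ) ^ x j)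
            * ∏ j ∈ Finset.univ.filter (fun j : Fin m => ¬((e j).1 = q ∨ (e j).2 = q)),
              ((sjF (R j) (e j) W t').card : ℝ) ^ x j := by
          rw [← Finset.sum_mul]
      _ ≤ (∏ j ∈ A, ((sjF (R j) (e j) W t').card : ℝ) ^ x j)
            * ∏ j ∈ Finset.univ.filter (fun j : Fin m => ¬((e j).1 = q ∨ (e j).2 = q)),
              ((sjF (R j) (e j) W t').card : ℝ) ^ x j := by
          refine mul_le_mul_of_nonneg_right hinner ?_
          exact Finset.prod_nonneg fun j _ => Real.rpow_nonneg (Nat.cast_nonneg _) _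
      _ = ∏ j, ((sjF (R j) (e j) W t').card : ℝ) ^ x j := by
          rw [hA]
          exact Finset.prod_filter_mul_prod_filter_not Finset.univ _ _

/-- Query decomposition lemma: let `Q` be a graph with finite node set `VQ`
and edges `e 0, …, e (m-1)` (ordered pairs of nodes), let `D` be a finite
set, and let `R j ⊆ D × D` be a relation for each edge. Let `x` be a
fractional edge cover of `Q` and let `U` be a nonempty proper subset of
`VQ`. Let `L` be the set of partial tuples `t : U → D` such that
`R j ⋉ t` is nonempty for every edge `e j` having an endpoint in `U`. Then
`∑_{t ∈ L} ∏_j |R j ⋉ t| ^ (x j) ≤ ∏_j |R j| ^ (x j)`. -/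
theorem query_decomposition {VQ D : Type*} [Fintype VQ] [Fintype D]
    (m : ℕ) (e : Fin m → VQ × VQ) (R : Fin m → Set (D × D))
    (x : Fin m → ℝ) (hx : ∀ j, 0 < x j)
    (hcover : ∀ q : VQ,
      1 ≤ ∑ j ∈ Finset.univ.filter (fun j : Fin m => (e j).1 = q ∨ (e j).2 = q), x j)
    (U : Set VQ) (hU : U.Nonempty) (hUproper : U ≠ Set.univ) :
    (∑ᶠ t ∈ {t : U → D |
        ∀ j : Fin m, ((e j).1 ∈ U ∨ (e j).2 ∈ U) → (semijoin (R j) (e j) U t).Nonempty},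
      ∏ j : Fin m, (Nat.card (semijoin (R j) (e j) U t) : ℝ) ^ (x j))
      ≤ ∏ j : Fin m, (Nat.card (R j) : ℝ) ^ (x j) := by
  classical
  have hRHSnn : (0 : ℝ) ≤ ∏ j : Fin m, (Nat.card (R j) : ℝ) ^ (x j) :=
    Finset.prod_nonneg fun j _ => Real.rpow_nonneg (Nat.cast_nonneg _) _
  rcases isEmpty_or_nonempty D with hD | hD
  · have hE : IsEmpty (↥U → D) :=
      ⟨fun t => hD.false (t ⟨hU.choose, hU.choose_spec⟩)⟩
    rw [finsum_mem_eq_finite_toFinset_sum _ (Set.toFinite _),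
      Finset.eq_empty_of_isEmpty ((Set.toFinite _).toFinset), Finset.sum_empty]
    exact hRHSnn
  · obtain ⟨d₀⟩ := hD
    -- extension of partial tuples to total tuples
    set ext : (↥U → D) → (VQ → D) :=
      fun t r => if h : r ∈ U then t ⟨r, h⟩ else d₀ with hext
    have hext_mem : ∀ (t : ↥U → D) (r : VQ) (h : r ∈ U), ext t r = t ⟨r, h⟩ := by
      intro t r h; simp [hext, dif_pos h]
    have hext_nmem : ∀ (t : ↥U → D) (r : VQ), r ∉ U → ext t r = d₀ := by
      intro t r h; simp [hext, dif_neg h]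
    have hbridge : ∀ (j : Fin m) (t : ↥U → D),
        Nat.card (semijoin (R j) (e j) U t)
          = (sjF (R j) (e j) U.toFinset (ext t)).card := by
      intro j t
      have hset : semijoin (R j) (e j) U t
          = ↑(sjF (R j) (e j) U.toFinset (ext t)) := by
        ext p
        simp only [semijoin, Set.mem_setOf_eq, sjF, Finset.coe_filter, Finset.mem_univ,
          true_and, Set.mem_toFinset]
        constructor
        · rintro ⟨hR, h1, h2⟩
          exact ⟨hR, fun h => by rw [h1 h, hext_mem t _ h],
            fun h => by rw [h2 h, hext_mem t _ h]⟩
        · rintro ⟨hR, h1, h2⟩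
          exact ⟨hR, fun h => by rw [h1 h, hext_mem t _ h],
            fun h => by rw [h2 h, hext_mem t _ h]⟩
      rw [hset, Nat.card_coe_set_eq, Set.ncard_coe_finset]
    have hext_inj : Function.Injective ext := by
      intro t t' h
      funext r
      have := congrFun h r.1
      rwa [hext_mem t _ r.2, hext_mem t' _ r.2] at this
    have hbase : ∀ j : Fin m,
        (Nat.card (R j) : ℝ) = ((sjF (R j) (e j) (∅ : Finset VQ) (fun _ => d₀)).card : ℝ) := by
      intro j
      have hset : (R j) = ↑(sjF (R j) (e j) (∅ : Finset VQ) (fun _ => d₀)) := by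
        ext p
        simp [sjF]
      have h2 : Nat.card (R j) = (sjF (R j) (e j) (∅ : Finset VQ) (fun _ => d₀)).card := by
        conv_lhs => rw [hset]
        rw [Nat.card_coe_set_eq, Set.ncard_coe_finset]
      exact_mod_cast h2
    set L : Set (↥U → D) := {t : U → D |
        ∀ j : Fin m, ((e j).1 ∈ U ∨ (e j).2 ∈ U) → (semijoin (R j) (e j) U t).Nonempty} with hL
    set f : (↥U → D) → ℝ :=
      fun t => ∏ j : Fin m, (Nat.card (semijoin (R j) (e j) U t) : ℝ) ^ (x j) with hf
    set g : (VQ → D) → ℝ :=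
      fun u => ∏ j : Fin m, ((sjF (R j) (e j) U.toFinset u).card : ℝ) ^ (x j) with hg
    have hfg : ∀ t : ↥U → D, f t = g (ext t) := by
      intro t
      refine Finset.prod_congr rfl fun j _ => ?_
      rw [hbridge j t]
    have hgnn : ∀ u, 0 ≤ g u := fun u =>
      Finset.prod_nonneg fun j _ => Real.rpow_nonneg (Nat.cast_nonneg _) _
    rw [finsum_mem_eq_finite_toFinset_sum _ (Set.toFinite L)]
    calc ∑ t ∈ (Set.toFinite L).toFinset, f t
        ≤ ∑ t ∈ (Finset.univ : Finset (↥U → D)), f t := by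
          refine Finset.sum_le_sum_of_subset_of_nonneg (Finset.subset_univ _) ?_
          intro t _ _
          rw [hfg t]
          exact hgnn _
      _ = ∑ t ∈ (Finset.univ : Finset (↥U → D)), g (ext t) :=
          Finset.sum_congr rfl fun t _ => hfg t
      _ = ∑ u ∈ Finset.univ.image ext, g u :=
          (Finset.sum_image fun t _ t' _ h => hext_inj h).symm
      _ ≤ ∑ u ∈ Finset.univ.filter (fun u : VQ → D => ∀ r, r ∉ U.toFinset → u r = d₀), g u := by
          refine Finset.sum_le_sum_of_subset_of_nonneg ?_ (fun u _ _ => hgnn u)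
          intro u hu
          simp only [Finset.mem_image] at hu
          obtain ⟨t, _, rfl⟩ := hu
          simp only [Finset.mem_filter, Finset.mem_univ, true_and]
          intro r hr
          exact hext_nmem t r (fun h => hr (Set.mem_toFinset.mpr h))
      _ ≤ ∏ j, ((sjF (R j) (e j) (∅ : Finset VQ) (fun _ => d₀)).card : ℝ) ^ x j :=
          main_ind m e R x hx hcover d₀ U.toFinset
      _ = ∏ j : Fin m, (Nat.card (R j) : ℝ) ^ (x j) :=
          Finset.prod_congr rfl fun j _ => by rw [hbase j]
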